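/- Let q be even, S an n×n matrix and B a 2×n matrix over F_q with S + S^T = B^T J_2 B where J_2 = [[0,1],[1,0]]. Write S = S' + C with S' symmetric and C strictly upper triangular (as in the unique decomposition in characteristic 2). Let X = (α_1,...,α_n), Y = (y_1,y_2) be row vectors over F_q and set Z = Y + X B^T with Z = (z_1,z_2). Then z_1 z_2 = y_1 y_2 + X B^T J_2 Y^T + X C X^T + Σ_{i=1}^n b_{1i} b_{2i} α_i^2. -/

import Mathlib

open Finset

theorem stmt_9 (F : Type*) [Field F] [Fintype F] (hq : Even (Fintype.card F)) (n : ℕ)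
    (S : Matrix (Fin n) (Fin n) F) (B : Matrix (Fin 2) (Fin n) F)
    (hS : S + S.transpose = B.transpose * !![(0 : F), 1; 1, 0] * B)
    (C : Matrix (Fin n) (Fin n) F)
    (hC : ∀ i j : Fin n, C i j = if i < j then S i j + S j i else 0)
    (X : Fin n → F) (Y Z : Fin 2 → F)
    (hZ : ∀ k, Z k = Y k + ∑ i, X i * B k i) :
    Z 0 * Z 1
      = Y 0 * Y 1
        + (∑ k : Fin 2, ∑ l : Fin 2, (∑ i, X i * B k i) * !![(0 : F), 1; 1, 0] k l * Y l)
        + (∑ i, ∑ j, X i * C i j * X j)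
        + ∑ i, B 0 i * B 1 i * X i ^ 2 := by
  have hs : ∀ i j : Fin n, S i j + S j i = B 0 j * B 1 i + B 0 i * B 1 j := by
    intro i j
    have := congrFun (congrFun hS i) j
    simpa [Matrix.mul_apply, Matrix.add_apply, Matrix.transpose_apply,
      Fin.sum_univ_succ, mul_comm] using this
  set f : Fin n → Fin n → F := fun i j => X i * X j * (B 0 i * B 1 j) with hf
  have h1 : (∑ i, ∑ j, X i * C i j * X j)
      = ∑ i, ∑ j ∈ Finset.Ioi i, (f j i + f i j) := by
    refine Finset.sum_congr rfl fun i _ => ?_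
    simp only [hC, mul_ite, ite_mul, mul_zero, zero_mul]
    rw [← Finset.sum_filter]
    refine Finset.sum_congr (by ext j; simp) fun j hj => ?_
    rw [hs i j, hf]
    ring
  have h2 : (∑ i, ∑ j ∈ Finset.Ioi i, (f j i + f i j)) + ∑ i, f i i
      = ∑ i, ∑ j, f i j := by
    rw [Finset.sum_sum_Ioi_add_eq_sum_sum_off_diag, ← Finset.sum_add_distrib]
    rw [Finset.sum_comm]
    refine Finset.sum_congr rfl fun i _ => ?_
    have h := Finset.sum_compl_add_sum {i} (fun j => f j i)
    rw [Finset.sum_singleton] at h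
    convert h using 3
  have key : (∑ i, X i * B 0 i) * (∑ i, X i * B 1 i)
      = (∑ i, ∑ j, X i * C i j * X j) + ∑ i, B 0 i * B 1 i * X i ^ 2 := by
    rw [h1, Finset.sum_mul_sum]
    rw [show (∑ i, B 0 i * B 1 i * X i ^ 2) = ∑ i, f i i from
      Finset.sum_congr rfl fun i _ => by rw [hf]; ring]
    rw [h2]
    exact Finset.sum_congr rfl fun i _ => Finset.sum_congr rfl fun j _ => by rw [hf]; ring
  rw [hZ, hZ]
  have e00 : !![(0 : F), 1; 1, 0] 0 0 = 0 := by norm_num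
  have e01 : !![(0 : F), 1; 1, 0] 0 1 = 1 := by norm_num
  have e10 : !![(0 : F), 1; 1, 0] 1 0 = 1 := by norm_num
  have e11 : !![(0 : F), 1; 1, 0] 1 1 = 0 := by norm_num
  simp only [Fin.sum_univ_two, e00, e01, e10, e11]
  linear_combination key
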